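/- Let L be symmetric with eigenvalues λ₁ ≥ … ≥ λ_n and orthonormal eigenvectors u₁,…,u_n, and let Q ∈ ℝ^{n×κ} have orthonormal columns with LQ = QT. Then ‖L − QTQᵀ‖²_F ≤ Σ_{i=1}^{j} λᵢ² ‖P⊥_Q uᵢ‖² + Σ_{i=j+1}^{n} λᵢ² for every 1 ≤ j ≤ n, where P⊥_Q = I − QQᵀ. -/
import Mathlib


open Matrix

private lemma frob_eq_trace {n m : ℕ} (A : Matrix (Fin n) (Fin m) ℝ) :
    ∑ i, ∑ k, (A i k) ^ 2 = Matrix.trace (A * Aᵀ) := by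
  simp [Matrix.trace, Matrix.mul_apply, Matrix.diag, sq]

/-- Low-rank approximation bound for the Lanczos algorithm: if `L = UΛUᵀ` with
eigenvalues `λ₁ ≥ … ≥ λ_n` and `LQ = QT` with `Q` orthonormal, then for every `j`,
`‖L − QTQᵀ‖²_F ≤ Σ_{i<j} λᵢ² ‖(I − QQᵀ)uᵢ‖² + Σ_{i≥j} λᵢ²`. -/
theorem lanczos_lowrank_bound {n κ : ℕ}
    (L U Λ : Matrix (Fin n) (Fin n) ℝ) (lam : Fin n → ℝ)
    (hL : L.IsSymm) (hU : Uᵀ * U = 1) (hΛ : Λ = Matrix.diagonal lam)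
    (hdecomp : L = U * Λ * Uᵀ)
    (hsort : ∀ i i' : Fin n, i ≤ i' → lam i' ≤ lam i)
    (Q : Matrix (Fin n) (Fin κ) ℝ) (T : Matrix (Fin κ) (Fin κ) ℝ)
    (hQ : Qᵀ * Q = 1) (hT : T = Qᵀ * L * Q) (hLQ : L * Q = Q * T)
    (j : ℕ) (hj1 : 1 ≤ j) (hjn : j ≤ n) :
    ∑ i, ∑ k, ((L - Q * T * Qᵀ) i k) ^ 2
      ≤ ∑ i : Fin n,
          (if (i : ℕ) < j then
            (lam i) ^ 2 *
              (∑ r, ((((1 : Matrix (Fin n) (Fin n) ℝ) - Q * Qᵀ) *ᵥ fun s => U s i) r) ^ 2)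
          else (lam i) ^ 2) := by
  set P : Matrix (Fin n) (Fin n) ℝ := Q * Qᵀ with hP
  set E : Matrix (Fin n) (Fin n) ℝ := 1 - P with hE
  have hPP : P * P = P := by
    rw [hP, Matrix.mul_assoc, ← Matrix.mul_assoc Qᵀ, hQ, Matrix.one_mul]
  have hPsym : Pᵀ = P := by rw [hP, Matrix.transpose_mul, Matrix.transpose_transpose]
  have hEsym : Eᵀ = E := by rw [hE, Matrix.transpose_sub, Matrix.transpose_one, hPsym]
  have hEE : E * E = E := by
    rw [hE, sub_mul, one_mul, mul_sub, mul_one, hPP, sub_self, sub_zero]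
  have hTsym : Tᵀ = T := by
    rw [hT, Matrix.transpose_mul, Matrix.transpose_mul, Matrix.transpose_transpose,
      hL.eq, Matrix.mul_assoc]
  have hQL : Qᵀ * L = T * Qᵀ := by
    have h := congrArg Matrix.transpose hLQ
    rw [Matrix.transpose_mul, Matrix.transpose_mul, hL.eq, hTsym] at h
    exact h
  have key : L - Q * T * Qᵀ = E * L := by
    rw [hE, sub_mul, one_mul, hP, Matrix.mul_assoc Q Qᵀ L, hQL, ← Matrix.mul_assoc]
  -- step: ‖E L‖² = ‖E U Λ‖²
  have hEL : E * L = (E * U * Λ) * Uᵀ := by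
    rw [hdecomp, ← Matrix.mul_assoc, ← Matrix.mul_assoc]
  have htr : (E * L) * (E * L)ᵀ = (E * U * Λ) * (E * U * Λ)ᵀ := by
    rw [hEL, Matrix.transpose_mul, Matrix.transpose_transpose, Matrix.mul_assoc (E * U * Λ),
      ← Matrix.mul_assoc Uᵀ, hU, Matrix.one_mul]
  have hfrob : ∑ i, ∑ k, ((L - Q * T * Qᵀ) i k) ^ 2
      = ∑ i, ∑ k, ((E * U * Λ) i k) ^ 2 := by
    rw [key, frob_eq_trace, frob_eq_trace, htr]
  -- entries of E U Λ
  have hN : ∀ i k, (E * U * Λ) i k = ((E * U) i k) * lam k := by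
    intro i k
    rw [hΛ, Matrix.mul_diagonal]
  have hcol : ∀ k r, (E *ᵥ fun s => U s k) r = (E * U) r k := by
    intro k r
    simp [Matrix.mulVec, Matrix.mul_apply, dotProduct]
  have hmain : ∑ i, ∑ k, ((E * U * Λ) i k) ^ 2
      = ∑ k : Fin n, (lam k) ^ 2 * ∑ r, ((E *ᵥ fun s => U s k) r) ^ 2 := by
    rw [Finset.sum_comm]
    refine Finset.sum_congr rfl fun k _ => ?_
    rw [Finset.mul_sum]
    refine Finset.sum_congr rfl fun i _ => ?_
    rw [hN, hcol, mul_pow]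
    ring
  rw [hfrob, hmain]
  -- now compare termwise with the if-sum
  refine Finset.sum_le_sum fun i _ => ?_
  by_cases hij : (i : ℕ) < j
  · rw [if_pos hij]
  · rw [if_neg hij]
    -- need lam i ^ 2 * c ≤ lam i ^ 2 with c ≤ 1
    have hc : ∑ r, ((E *ᵥ fun s => U s i) r) ^ 2 ≤ 1 := by
      set u : Fin n → ℝ := fun s => U s i with hu
      have hnorm : u ⬝ᵥ u = 1 := by
        have h := congrFun (congrFun hU i) i
        simpa [Matrix.mul_apply, Matrix.one_apply, dotProduct, hu,
          Matrix.transpose_apply] using h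
      have hsum : ∑ r, ((E *ᵥ u) r) ^ 2 = (E *ᵥ u) ⬝ᵥ (E *ᵥ u) := by
        simp [dotProduct, sq]
      have hquad : (E *ᵥ u) ⬝ᵥ (E *ᵥ u) = u ⬝ᵥ (E *ᵥ u) := by
        rw [Matrix.dotProduct_mulVec, ← Matrix.mulVec_transpose, hEsym,
          Matrix.mulVec_mulVec, hEE]
        exact dotProduct_comm _ _
      have hPu : u ⬝ᵥ (P *ᵥ u) = (Qᵀ *ᵥ u) ⬝ᵥ (Qᵀ *ᵥ u) := by
        rw [hP, ← Matrix.mulVec_mulVec, Matrix.dotProduct_mulVec, ← Matrix.mulVec_transpose]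
      have hPu0 : 0 ≤ u ⬝ᵥ (P *ᵥ u) := by
        rw [hPu]
        exact Finset.sum_nonneg fun k _ => mul_self_nonneg _
      have hEu : u ⬝ᵥ (E *ᵥ u) = 1 - u ⬝ᵥ (P *ᵥ u) := by
        rw [hE, Matrix.sub_mulVec, dotProduct_sub, Matrix.one_mulVec, hnorm]
      rw [hsum, hquad, hEu]
      linarith
    calc lam i ^ 2 * ∑ r, ((E *ᵥ fun s => U s i) r) ^ 2
        ≤ lam i ^ 2 * 1 := by
          exact mul_le_mul_of_nonneg_left hc (sq_nonneg _)
      _ = lam i ^ 2 := mul_one _
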